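/- Let 0 < ε < 1 and suppose D ≥ (e/(1-ε))^{2/ε} and D ≥ 2/ε. Then with η = h(D-1)·(D/(D-1))·(1-ε), one has η e^{-η} · (D-1)/h(D-1) ≥ ((1-ε)/e) · D^{ε/2} ≥ 1. -/

import Mathlib

/-- Harmonic sum h(n) = Σ_{i=1}^n 1/i. -/
noncomputable def harmonicSum (n : ℕ) : ℝ := ∑ i ∈ Finset.Icc 1 n, (1 : ℝ) / i

lemma harmonicSum_eq (n : ℕ) : harmonicSum n = (harmonic n : ℝ) := by
  rw [harmonicSum, harmonic_eq_sum_Icc]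
  push_cast
  simp [one_div]

lemma harmonicSum_le (n : ℕ) : harmonicSum n ≤ 1 + Real.log n := by
  rw [harmonicSum_eq]; exact harmonic_le_one_add_log n

lemma harmonicSum_pos {n : ℕ} (hn : 1 ≤ n) : 0 < harmonicSum n := by
  rw [harmonicSum_eq]
  exact_mod_cast harmonic_pos (Nat.one_le_iff_ne_zero.mp hn)

/-- Stability condition: if D ≥ (e/(1-ε))^{2/ε} and D ≥ 2/ε, then with
η = h(D-1)·(D/(D-1))·(1-ε) one has
η e^{-η} (D-1)/h(D-1) ≥ ((1-ε)/e) D^{ε/2} ≥ 1. -/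
theorem stability_condition (D : ℕ) (ε : ℝ) (hε : 0 < ε) (hε1 : ε < 1)
    (hD1 : (Real.exp 1 / (1 - ε)) ^ ((2 : ℝ) / ε) ≤ (D : ℝ))
    (hD2 : 2 / ε ≤ (D : ℝ))
    (η : ℝ)
    (hη : η = harmonicSum (D - 1) * ((D : ℝ) / ((D : ℝ) - 1)) * (1 - ε)) :
    ((1 - ε) / Real.exp 1) * (D : ℝ) ^ (ε / 2)
        ≤ η * Real.exp (-η) * (((D : ℝ) - 1) / harmonicSum (D - 1))
    ∧ (1 : ℝ) ≤ ((1 - ε) / Real.exp 1) * (D : ℝ) ^ (ε / 2) := by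
  have hε' : 0 < 1 - ε := by linarith
  have he1 : (2.7 : ℝ) < Real.exp 1 := by
    have := Real.exp_one_gt_d9; linarith
  have hbase : Real.exp 1 ≤ Real.exp 1 / (1 - ε) := by
    rw [le_div_iff₀ hε']
    nlinarith [Real.exp_pos 1]
  -- D ≥ e^(2/ε)
  have hDexp : Real.exp (2 / ε) ≤ (D : ℝ) := by
    calc Real.exp (2 / ε) = (Real.exp 1) ^ ((2:ℝ)/ε) := by
          rw [← Real.exp_one_rpow (2/ε)]
      _ ≤ (Real.exp 1 / (1 - ε)) ^ ((2:ℝ)/ε) := by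
          apply Real.rpow_le_rpow (le_of_lt (Real.exp_pos 1)) hbase
          positivity
      _ ≤ (D : ℝ) := hD1
  have hd0 : (0:ℝ) < D := lt_of_lt_of_le (Real.exp_pos _) hDexp
  set d : ℝ := (D : ℝ) with hd
  set L : ℝ := Real.log d with hL
  have hLge : 2 / ε ≤ L := by
    rw [hL, ← Real.log_exp (2/ε)]
    exact Real.log_le_log (Real.exp_pos _) hDexp
  have hεL : 2 ≤ ε * L := by
    rw [div_le_iff₀ hε] at hLge; linarith [mul_comm ε L]
  have hL2 : 2 ≤ L := le_trans (by rw [le_div_iff₀ hε]; nlinarith) hLge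
  have hd8 : (7:ℝ) ≤ d := by
    have h2 : Real.exp 2 ≤ d :=
      le_trans (Real.exp_le_exp.mpr (by rw [le_div_iff₀ hε]; nlinarith)) hDexp
    have he : Real.exp 2 = Real.exp 1 * Real.exp 1 := by
      rw [← Real.exp_add]; norm_num
    nlinarith
  -- log d ≤ d - 2 via log d = 2 log √d ≤ 2(√d - 1)
  have hLd : L ≤ d - 2 := by
    have hsq : Real.sqrt d * Real.sqrt d = d := Real.mul_self_sqrt hd0.le
    have h1 : Real.log (Real.sqrt d) ≤ Real.sqrt d - 1 :=
      Real.log_le_sub_one_of_pos (Real.sqrt_pos.mpr hd0)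
    have h2 : L = 2 * Real.log (Real.sqrt d) := by
      rw [hL, Real.log_sqrt hd0.le]; ring
    have h3 : (2:ℝ) ≤ Real.sqrt d := by
      nlinarith [Real.sqrt_nonneg d, hsq]
    nlinarith
  -- D ≥ 3 as a natural, cast of D - 1
  have hD3 : 3 ≤ D := by
    have : (3:ℝ) ≤ (D:ℝ) := by linarith
    exact_mod_cast this
  have hcast : ((D - 1 : ℕ) : ℝ) = d - 1 := by
    rw [Nat.cast_sub (by omega)]; norm_num [hd]
  have hd1 : (0:ℝ) < d - 1 := by linarith
  set h : ℝ := harmonicSum (D - 1) with hh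
  have hhpos : 0 < h := harmonicSum_pos (by omega)
  have hhle : h ≤ 1 + L := by
    calc h ≤ 1 + Real.log ((D-1:ℕ):ℝ) := harmonicSum_le _
      _ ≤ 1 + L := by
        apply (add_le_add_iff_left 1).mpr
        rw [hcast, hL]
        exact Real.log_le_log (by linarith) (by linarith)
  -- key: η ≤ 1 + (1 - ε/2) * L
  have hkey : η ≤ 1 + (1 - ε/2) * L := by
    have hfrac : 0 < d / (d - 1) := by positivity
    have h1 : η ≤ (1 + L) * (d / (d - 1)) * (1 - ε) := by
      rw [hη]
      apply mul_le_mul_of_nonneg_right _ hε'.le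
      exact mul_le_mul_of_nonneg_right hhle hfrac.le
    have hεd : 2 + 2*ε ≤ ε * d := by nlinarith [mul_le_mul_of_nonneg_left hLd hε.le]
    have h2' : (1 + L) * d * (1 - ε) ≤ (1 + (1 - ε/2) * L) * (d - 1) := by
      have hP : 0 ≤ L * (ε*d + ε - 2) :=
        mul_nonneg (by linarith) (by linarith)
      have hexp : (1 + (1 - ε/2) * L) * (d - 1) - (1 + L) * d * (1 - ε)
          = (ε*d - 1) + (1/2) * (L * (ε*d + ε - 2)) := by ring
      linarith
    have h2 : (1 + L) * (d / (d - 1)) * (1 - ε) ≤ 1 + (1 - ε/2) * L := by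
      have : (1 + L) * (d / (d - 1)) * (1 - ε) = (1 + L) * d * (1 - ε) / (d - 1) := by ring
      rw [this, div_le_iff₀ hd1]; linarith
    linarith
  have hrpow : d ^ (ε/2) = Real.exp (ε/2 * L) := by
    rw [hL, Real.rpow_def_of_pos hd0, mul_comm]
  constructor
  · -- first inequality
    have hsimp : η * Real.exp (-η) * ((d - 1) / h) = (1 - ε) * d * Real.exp (-η) := by
      rw [hη]; field_simp
    rw [hsimp]
    have : (1 - ε) / Real.exp 1 * d ^ (ε/2) = (1 - ε) * Real.exp (ε/2 * L - 1) := by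
      rw [hrpow, Real.exp_sub]; ring
    rw [this]
    have hdL : d = Real.exp L := by rw [hL, Real.exp_log hd0]
    have : (1 - ε) * d * Real.exp (-η) = (1 - ε) * Real.exp (L - η) := by
      rw [Real.exp_sub, hdL, Real.exp_neg]; ring
    rw [this]
    apply mul_le_mul_of_nonneg_left _ hε'.le
    apply Real.exp_le_exp.mpr
    linarith
  · -- second inequality
    have h1 : Real.exp 1 / (1 - ε) ≤ d ^ (ε/2) := by
      have h0 : (0:ℝ) < Real.exp 1 / (1 - ε) := by positivity
      calc Real.exp 1 / (1 - ε)
          = ((Real.exp 1 / (1 - ε)) ^ ((2:ℝ)/ε)) ^ (ε/2) := by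
            rw [← Real.rpow_mul h0.le,
              show (2:ℝ)/ε * (ε/2) = 1 by field_simp, Real.rpow_one]
        _ ≤ d ^ (ε/2) := Real.rpow_le_rpow (by positivity) hD1 (by positivity)
    rw [div_mul_eq_mul_div, le_div_iff₀ (Real.exp_pos 1), one_mul]
    rw [div_le_iff₀ hε'] at h1
    linarith
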